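/- Let f be an entire function with (2α/π)∫_ℂ |f(z)|² e^{-α|z|²} dA(z) = 1, α > 0, and let Ω ⊆ ℂ be measurable with finite Lebesgue measure |Ω|. Then ∫_Ω |f(z)|² e^{-α|z|²} dA(z) ≤ ∫_0^{|Ω|} e^{-α s/π} ds = (π/α)(1 - e^{-α|Ω|/π}). -/

import Mathlib

open MeasureTheory Real Set

/-- Sub-mean-value inequality for the norm of an entire function on circles. -/
lemma fk_submean (g : ℂ → ℂ) (hg : Differentiable ℂ g) {r : ℝ} (hr : 0 < r) :
    2 * π * ‖g 0‖ ≤ ∫ θ in (0:ℝ)..(2*π), ‖g (circleMap 0 r θ)‖ := by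
  have h := (hg.diffContOnCl (s := Metric.ball (0:ℂ) r)).circleIntegral_sub_inv_smul
    (w := 0) (Metric.mem_ball_self hr)
  have h2 : ‖(2 * π * Complex.I : ℂ) • g 0‖ = 2 * π * ‖g 0‖ := by
    rw [norm_smul]
    simp [abs_of_nonneg Real.pi_pos.le]
  calc 2 * π * ‖g 0‖ = ‖∮ z in C(0, r), (z - 0)⁻¹ • g z‖ := by rw [h, h2]
    _ ≤ ∫ θ in (0:ℝ)..(2*π), ‖deriv (circleMap 0 r) θ • (circleMap 0 r θ - 0)⁻¹ • g (circleMap 0 r θ)‖ := by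
        apply intervalIntegral.norm_integral_le_integral_norm
        positivity
    _ = ∫ θ in (0:ℝ)..(2*π), ‖g (circleMap 0 r θ)‖ := by
        apply intervalIntegral.integral_congr
        intro θ _
        have h0 : ‖circleMap 0 r θ‖ ≠ 0 := norm_ne_zero_iff.mpr (circleMap_ne_center hr.ne')
        simp only [deriv_circleMap, sub_zero, smul_eq_mul, norm_mul, norm_inv]
        rw [Complex.norm_I, mul_one, ← mul_assoc, mul_inv_cancel₀ h0, one_mul]

/-- The sub-mean-value inequality in polar-coordinate form over `Ioo (-π) π`. -/
lemma fk_submean' (g : ℂ → ℂ) (hg : Differentiable ℂ g) {r : ℝ} (hr : 0 < r) :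
    2 * π * ‖g 0‖ ≤ ∫ θ in Ioo (-π) π, ‖g (Complex.polarCoord.symm (r, θ))‖ := by
  have hcm : ∀ θ : ℝ, Complex.polarCoord.symm (r, θ) = circleMap 0 r θ := by
    intro θ
    rw [Complex.polarCoord_symm_apply, circleMap]
    simp only [Complex.exp_mul_I, Complex.ofReal_cos, Complex.ofReal_sin, zero_add]
  simp_rw [hcm]
  have hper : Function.Periodic (fun θ : ℝ => ‖g (circleMap 0 r θ)‖) (2 * π) := by
    intro θ; simp [periodic_circleMap 0 r θ]
  have : ∫ θ in Ioo (-π) π, ‖g (circleMap 0 r θ)‖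
      = ∫ θ in (0:ℝ)..(2*π), ‖g (circleMap 0 r θ)‖ := by
    rw [setIntegral_congr_set Ioo_ae_eq_Ioc]
    rw [← intervalIntegral.integral_of_le (by linarith [Real.pi_pos] : (-π : ℝ) ≤ π)]
    have := hper.intervalIntegral_add_eq (-π) 0
    simp only [zero_add] at this
    rw [show (-π) + 2 * π = π by ring] at this
    exact this
  rw [this]
  exact fk_submean g hg hr

lemma fk_polar_symm_eq (p : ℝ × ℝ) :
    (Complex.measurableEquivRealProd.symm (polarCoord.symm p) : ℂ)
      = Complex.polarCoord.symm p := by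
  have hps : polarCoord.symm p = (p.1 * Real.cos p.2, p.1 * Real.sin p.2) := rfl
  rw [hps, Complex.measurableEquivRealProd_symm_apply, Complex.polarCoord_symm_apply]
  apply Complex.ext <;> simp [Complex.cos_ofReal_re, Complex.sin_ofReal_re]

/-- Integrability of the polar-coordinate integrand. -/
lemma fk_polar_integrable (u : ℂ → ℝ) (hu : Integrable u) :
    IntegrableOn (fun p : ℝ × ℝ => p.1 • u (Complex.polarCoord.symm p))
      polarCoord.target := by
  have hmp : MeasurePreserving (⇑Complex.measurableEquivRealProd.symm) volume volume :=
    MeasurePreserving.symm Complex.measurableEquivRealProd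
      Complex.volume_preserving_equiv_real_prod
  have hv : Integrable (u ∘ Complex.measurableEquivRealProd.symm) :=
    (hmp.integrable_comp_emb
      Complex.measurableEquivRealProd.symm.measurableEmbedding).mpr hu
  set B : ℝ × ℝ → ℝ × ℝ →L[ℝ] ℝ × ℝ := fun p =>
    LinearMap.toContinuousLinearMap (Matrix.toLin (Module.Basis.finTwoProd ℝ) (Module.Basis.finTwoProd ℝ)
      !![Real.cos p.2, -p.1 * Real.sin p.2; Real.sin p.2, p.1 * Real.cos p.2]) with hB
  have A : ∀ p ∈ polarCoord.target, HasFDerivWithinAt polarCoord.symm (B p) polarCoord.target p :=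
    fun p _ => (hasFDerivAt_polarCoord_symm p).hasFDerivWithinAt
  have B_det : ∀ p, (B p).det = p.1 := by
    intro p
    conv_rhs => rw [← one_mul p.1, ← cos_sq_add_sin_sq p.2]
    simp only [hB, neg_mul, LinearMap.det_toContinuousLinearMap, LinearMap.det_toLin,
      Matrix.det_fin_two_of, sub_neg_eq_add]
    ring
  have hinj : Set.InjOn polarCoord.symm polarCoord.target := polarCoord.symm.injOn
  have hmeas : MeasurableSet polarCoord.target := polarCoord.open_target.measurableSet
  have himg : polarCoord.symm '' polarCoord.target = polarCoord.source :=
    polarCoord.symm_image_target_eq_source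
  have hvOn : IntegrableOn (u ∘ Complex.measurableEquivRealProd.symm)
      (polarCoord.symm '' polarCoord.target) := by
    rw [himg]; exact hv.integrableOn
  have key := (integrableOn_image_iff_integrableOn_abs_det_fderiv_smul volume hmeas A hinj
    (u ∘ Complex.measurableEquivRealProd.symm)).mp hvOn
  refine key.congr_fun (fun p hp => ?_) hmeas
  dsimp only
  rw [B_det, abs_of_pos hp.1]
  simp only [Function.comp_apply, fk_polar_symm_eq]

/-- Value of the radial Gaussian integral. -/
lemma fk_radial (α : ℝ) (hα : 0 < α) :
    ∫ r in Ioi (0:ℝ), r * Real.exp (-(α * r ^ 2)) = 1 / (2 * α) := by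
  have h := MeasureTheory.integral_Ioi_of_hasDerivAt_of_tendsto
    (f := fun r : ℝ => -Real.exp (-(α * r ^ 2)) / (2 * α))
    (f' := fun r : ℝ => r * Real.exp (-(α * r ^ 2))) (a := 0) (m := 0)
    ?_ ?_ ?_ ?_
  · rw [h]
    norm_num
    ring
  · exact (Continuous.continuousWithinAt (by continuity))
  · intro x _
    have : HasDerivAt (fun r : ℝ => -(α * r ^ 2)) (-(α * (2 * x))) x := by
      simpa using ((hasDerivAt_pow 2 x).const_mul α).fun_neg
    have h2 := (this.exp.fun_neg).div_const (2 * α)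
    refine h2.congr_deriv ?_
    field_simp
  · have := (integrable_mul_exp_neg_mul_sq hα).integrableOn (s := Ioi 0)
    simpa [neg_mul] using this
  · have hpow : Filter.Tendsto (fun r : ℝ => α * r ^ 2) Filter.atTop Filter.atTop :=
      (Filter.tendsto_pow_atTop (two_ne_zero)).const_mul_atTop hα
    have : Filter.Tendsto (fun r : ℝ => -(α * r ^ 2)) Filter.atTop Filter.atBot :=
      Filter.tendsto_neg_atBot_iff.mpr hpow
    have h3 := (Real.tendsto_exp_atBot.comp this).div_const (2 * α)
    simpa [neg_div] using h3.neg

/-- Core reproducing-kernel style bound: the weighted Gaussian integral of an entire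
function dominates its value at the origin. -/
lemma fk_core (α : ℝ) (hα : 0 < α) (g : ℂ → ℂ) (hg : Differentiable ℂ g)
    (hint : Integrable (fun z : ℂ => ‖g z‖ * Real.exp (-(α * ‖z‖ ^ 2)))) :
    ‖g 0‖ * (π / α) ≤ ∫ z : ℂ, ‖g z‖ * Real.exp (-(α * ‖z‖ ^ 2)) := by
  set u : ℂ → ℝ := fun z => ‖g z‖ * Real.exp (-(α * ‖z‖ ^ 2)) with hu_def
  have htarget : polarCoord.target = Set.Ioi (0:ℝ) ×ˢ Set.Ioo (-π) π := rfl
  have hpolar := Complex.integral_comp_polarCoord_symm u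
  have hIO : IntegrableOn (fun p : ℝ × ℝ => p.1 • u (Complex.polarCoord.symm p))
      polarCoord.target := fk_polar_integrable u hint
  rw [htarget] at hpolar hIO
  have hprod : Integrable (fun p : ℝ × ℝ => p.1 • u (Complex.polarCoord.symm p))
      ((volume.restrict (Ioi 0)).prod (volume.restrict (Ioo (-π) π))) := by
    rwa [IntegrableOn, Measure.volume_eq_prod, ← Measure.prod_restrict] at hIO
  have hFub : ∫ z : ℂ, u z
      = ∫ r in Ioi (0:ℝ), ∫ θ in Ioo (-π) π, (r • u (Complex.polarCoord.symm (r, θ))) := by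
    rw [← hpolar, Measure.volume_eq_prod, ← Measure.prod_restrict]
    exact MeasureTheory.integral_prod _ hprod
  have habs : ∀ r : ℝ, 0 < r → ∀ θ : ℝ, u (Complex.polarCoord.symm (r, θ))
      = ‖g (Complex.polarCoord.symm (r, θ))‖ * Real.exp (-(α * r ^ 2)) := by
    intro r hr θ
    have : ‖Complex.polarCoord.symm (r, θ)‖ = r := by
      rw [Complex.norm_polarCoord_symm, abs_of_pos hr]
    rw [hu_def]; dsimp only; rw [this]
  have hinner : ∀ r ∈ Ioi (0:ℝ),
      2 * π * ‖g 0‖ * (r * Real.exp (-(α * r ^ 2)))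
        ≤ ∫ θ in Ioo (-π) π, (r • u (Complex.polarCoord.symm (r, θ))) := by
    intro r hr
    have hr' : (0:ℝ) < r := hr
    have : ∫ θ in Ioo (-π) π, (r • u (Complex.polarCoord.symm (r, θ)))
        = r * Real.exp (-(α * r ^ 2)) * ∫ θ in Ioo (-π) π, ‖g (Complex.polarCoord.symm (r, θ))‖ := by
      rw [← integral_const_mul]
      apply setIntegral_congr_fun measurableSet_Ioo
      intro θ _
      dsimp only
      rw [habs r hr' θ, smul_eq_mul]
      ring
    rw [this]
    have hge := fk_submean' g hg hr'
    have hpos : 0 ≤ r * Real.exp (-(α * r ^ 2)) := by positivity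
    calc 2 * π * ‖g 0‖ * (r * Real.exp (-(α * r ^ 2)))
        = r * Real.exp (-(α * r ^ 2)) * (2 * π * ‖g 0‖) := by ring
      _ ≤ r * Real.exp (-(α * r ^ 2)) * ∫ θ in Ioo (-π) π, ‖g (Complex.polarCoord.symm (r, θ))‖ :=
          mul_le_mul_of_nonneg_left hge hpos
  have hlhs_int : IntegrableOn
      (fun r : ℝ => 2 * π * ‖g 0‖ * (r * Real.exp (-(α * r ^ 2)))) (Ioi 0) := by
    have := (integrable_mul_exp_neg_mul_sq hα).const_mul (2 * π * ‖g 0‖)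
    simpa [neg_mul, mul_assoc] using this.integrableOn
  have hrhs_int : Integrable
      (fun r : ℝ => ∫ θ in Ioo (-π) π, (r • u (Complex.polarCoord.symm (r, θ))))
      (volume.restrict (Ioi 0)) := hprod.integral_prod_left
  have hmono : ∫ r in Ioi (0:ℝ), 2 * π * ‖g 0‖ * (r * Real.exp (-(α * r ^ 2)))
      ≤ ∫ r in Ioi (0:ℝ), ∫ θ in Ioo (-π) π, (r • u (Complex.polarCoord.symm (r, θ))) :=
    setIntegral_mono_on hlhs_int hrhs_int measurableSet_Ioi hinner
  have hval : ∫ r in Ioi (0:ℝ), 2 * π * ‖g 0‖ * (r * Real.exp (-(α * r ^ 2)))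
      = 2 * π * ‖g 0‖ * (1 / (2 * α)) := by
    rw [integral_const_mul, fk_radial α hα]
  rw [hval] at hmono
  rw [hFub]
  calc ‖g 0‖ * (π / α) = 2 * π * ‖g 0‖ * (1 / (2 * α)) := by field_simp
    _ ≤ _ := hmono

/-- Pointwise bound for functions in Fock space. -/
lemma fk_pointwise (α : ℝ) (hα : 0 < α) (f : ℂ → ℂ) (hf : Differentiable ℂ f)
    (hint : Integrable (fun z : ℂ => ‖f z‖ ^ 2 * Real.exp (-(α * ‖z‖ ^ 2)))) (a : ℂ) :
    ‖f a‖ ^ 2 * Real.exp (-(α * ‖a‖ ^ 2)) * (π / α)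
      ≤ ∫ z : ℂ, ‖f z‖ ^ 2 * Real.exp (-(α * ‖z‖ ^ 2)) := by
  set g : ℂ → ℂ := fun w => (f (w + a)) ^ 2 *
    Complex.exp (-(α : ℂ) * (2 * (starRingEnd ℂ a) * w + (‖a‖ : ℂ) ^ 2)) with hg_def
  have hgdiff : Differentiable ℂ g := by
    apply Differentiable.mul
    · exact ((hf.comp (differentiable_id.add_const a))).pow 2
    · apply Complex.differentiable_exp.comp
      apply Differentiable.const_mul
      exact (differentiable_const _ |>.mul differentiable_id).add_const _
  have hnorm : ∀ w : ℂ, ‖g w‖ * Real.exp (-(α * ‖w‖ ^ 2))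
      = ‖f (w + a)‖ ^ 2 * Real.exp (-(α * ‖w + a‖ ^ 2)) := by
    intro w
    have hre : (-(α : ℂ) * (2 * (starRingEnd ℂ a) * w + (‖a‖ : ℂ) ^ 2)).re
        = -(α * (2 * ((starRingEnd ℂ a) * w).re + ‖a‖ ^ 2)) := by
      simp [Complex.mul_re, Complex.add_re, Complex.ofReal_re, Complex.ofReal_im,
        Complex.mul_im, ← Complex.ofReal_pow]
      try ring
      try tauto
    have hsq : ‖w + a‖ ^ 2 = ‖w‖ ^ 2 + 2 * ((starRingEnd ℂ a) * w).re + ‖a‖ ^ 2 := by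
      have h1 : ∀ z : ℂ, ‖z‖ ^ 2 = Complex.normSq z := fun z => by
        rw [Complex.sq_norm]
      rw [h1, h1, h1, Complex.normSq_add]
      have : (w * starRingEnd ℂ a).re = ((starRingEnd ℂ a) * w).re := by rw [mul_comm]
      rw [this]
      ring
    have hgw : ‖g w‖ = ‖f (w + a)‖ ^ 2
        * Real.exp (-(α * (2 * ((starRingEnd ℂ a) * w).re + ‖a‖ ^ 2))) := by
      rw [hg_def]
      dsimp only
      rw [norm_mul, norm_pow, Complex.norm_exp, hre]
    rw [hgw, mul_assoc, ← Real.exp_add]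
    congr 1
    rw [Real.exp_eq_exp, hsq]
    ring
  have hgint : Integrable (fun w : ℂ => ‖g w‖ * Real.exp (-(α * ‖w‖ ^ 2))) := by
    have htrans : Integrable (fun w : ℂ => ‖f (w + a)‖ ^ 2 * Real.exp (-(α * ‖w + a‖ ^ 2))) :=
      hint.comp_add_right a
    exact htrans.congr (Filter.Eventually.of_forall fun w => (hnorm w).symm)
  have hcore := fk_core α hα g hgdiff hgint
  have hg0 : ‖g 0‖ = ‖f a‖ ^ 2 * Real.exp (-(α * ‖a‖ ^ 2)) := by
    have := hnorm 0
    simpa using this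
  have hintval : ∫ w : ℂ, ‖g w‖ * Real.exp (-(α * ‖w‖ ^ 2))
      = ∫ z : ℂ, ‖f z‖ ^ 2 * Real.exp (-(α * ‖z‖ ^ 2)) := by
    rw [integral_congr_ae (Filter.Eventually.of_forall hnorm)]
    exact integral_add_right_eq_self (fun z : ℂ => ‖f z‖ ^ 2 * Real.exp (-(α * ‖z‖ ^ 2))) a
  rw [hg0, hintval] at hcore
  exact hcore

/-- Faber–Krahn inequality for the Fock space: a normalized entire function has
concentration at most `(π/α)(1 - e^{-α|Ω|/π})` on any set `Ω` of finite measure. -/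
theorem fock_faber_krahn
    (α : ℝ) (hα : 0 < α) (f : ℂ → ℂ) (hf : Differentiable ℂ f)
    (hnorm : (2 * α / π) * ∫ z : ℂ, ‖f z‖ ^ 2 * Real.exp (-(α * ‖z‖ ^ 2)) = 1)
    (Ω : Set ℂ) (hΩ : MeasurableSet Ω) (hΩfin : volume Ω < ⊤) :
    ∫ z in Ω, ‖f z‖ ^ 2 * Real.exp (-(α * ‖z‖ ^ 2)) ≤
      (π / α) * (1 - Real.exp (-(α * (volume Ω).toReal) / π)) := by
  have hπ : (0:ℝ) < π := Real.pi_pos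
  set u : ℂ → ℝ := fun z => ‖f z‖ ^ 2 * Real.exp (-(α * ‖z‖ ^ 2)) with hu_def
  have hint : Integrable u := by
    by_contra h
    rw [integral_undef h, mul_zero] at hnorm
    norm_num at hnorm
  have hIval : ∫ z : ℂ, u z = π / (2 * α) := by
    have hne : 2 * α / π ≠ 0 := by positivity
    field_simp at hnorm ⊢
    linarith
  have hpt : ∀ z : ℂ, u z ≤ 1 / 2 := by
    intro z
    have h2 : u z * (π / α) ≤ π / (2 * α) := by
      have := fk_pointwise α hα f hf hint z
      rw [hIval] at this
      exact this
    have hπα : (0:ℝ) < π / α := by positivity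
    have h3 : π / (2 * α) = (1 / 2) * (π / α) := by ring
    rw [h3] at h2
    exact le_of_mul_le_mul_right h2 hπα
  set m : ℝ := (volume Ω).toReal with hm_def
  have hm0 : 0 ≤ m := ENNReal.toReal_nonneg
  have hbound1 : ∫ z in Ω, u z ≤ (1 / 2) * m := by
    have h1 : ∫ z in Ω, u z ≤ ∫ _z in Ω, (1/2 : ℝ) :=
      setIntegral_mono_on hint.integrableOn
        (integrableOn_const hΩfin.ne) hΩ (fun z _ => hpt z)
    have h2 : ∫ _z in Ω, (1/2 : ℝ) = (1/2) * m := by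
      rw [setIntegral_const]
      simp [hm_def, mul_comm, Measure.real]
    linarith
  have hbound2 : ∫ z in Ω, u z ≤ π / (2 * α) := by
    have h8 : ∫ z in Ω, u z ≤ ∫ z : ℂ, u z :=
      setIntegral_le_integral hint (Filter.Eventually.of_forall (fun z => by positivity))
    rw [hIval] at h8
    exact h8
  set t : ℝ := α * m / π with ht_def
  have ht0 : 0 ≤ t := by positivity
  have harg : -(α * m) / π = -t := by rw [ht_def]; ring
  rw [harg]
  have hexp : Real.exp (-t) = 1 / Real.exp t := by
    rw [Real.exp_neg]; ring
  rcases le_or_gt t 1 with hcase | hcase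
  · have hmt : m = π * t / α := by rw [ht_def]; field_simp
    have he : Real.exp (-t) ≤ 1 / (1 + t) := by
      rw [hexp]
      apply div_le_div_of_nonneg_left one_pos.le (by linarith)
      exact Real.add_one_le_exp t |>.trans_eq' (by ring)
    have key : (π / α) * (t / 2) ≤ (π / α) * (1 - Real.exp (-t)) := by
      apply mul_le_mul_of_nonneg_left _ (by positivity)
      have h1t : (0:ℝ) < 1 + t := by linarith
      have h4 : t / 2 ≤ 1 - 1 / (1 + t) := by
        have h5 : 1 - 1 / (1 + t) = t / (1 + t) := by field_simp; ring
        rw [h5, div_le_div_iff₀ (by norm_num) h1t]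
        nlinarith
      linarith
    have h6 : ∫ z in Ω, u z ≤ (π / α) * (t / 2) := by
      rw [hmt] at hbound1
      calc ∫ z in Ω, u z ≤ (1/2) * (π * t / α) := hbound1
        _ = (π / α) * (t / 2) := by ring
    linarith
  · have he : Real.exp (-t) ≤ 1 / 2 := by
      have h1 : Real.exp (-t) ≤ Real.exp (-1) := Real.exp_le_exp.mpr (by linarith)
      have h2 : (2:ℝ) ≤ Real.exp 1 := by
        have := Real.add_one_le_exp 1
        linarith
      have h3 : Real.exp (-1) = 1 / Real.exp 1 := by rw [Real.exp_neg]; ring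
      rw [h3] at h1
      have : 1 / Real.exp 1 ≤ 1 / 2 :=
        div_le_div_of_nonneg_left one_pos.le (by norm_num) h2
      linarith
    have key : π / (2 * α) ≤ (π / α) * (1 - Real.exp (-t)) := by
      have h7 : π / (2 * α) = (π / α) * (1 / 2) := by ring
      rw [h7]
      exact mul_le_mul_of_nonneg_left (by linarith) (by positivity)
    linarith
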